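/- Let κ, λ ∈ ℝ and let φ : ℝ → ℝ be twice differentiable with φ''(s) = −κ·φ(s) for all s, φ(0) = 1, φ'(0) = −λ. Then the following are equivalent: (a) for every s ≥ 0 such that φ > 0 on [0, s], the derivative of the function u ↦ −φ'(u)/φ(u) at s is nonnegative; (b) either κ ≥ 0, or κ < 0 and |λ| ≥ √|κ|. -/

import Mathlib

/-- The weakly-monotone-condition characterization: for the
Jacobi solution `φ` (with `φ(0) = 1`, `φ'(0) = -λ`, `φ'' = -κ φ`), the
function `-φ'/φ` has nonnegative derivative wherever `φ > 0` on `[0, s]`,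
iff either `κ ≥ 0`, or `κ < 0` and `|λ| ≥ √|κ|`. -/
theorem weakly_monotone_condition_iff (κ lam : ℝ) (φ : ℝ → ℝ)
    (hφ : Differentiable ℝ φ) (hφ' : Differentiable ℝ (deriv φ))
    (hode : ∀ s : ℝ, deriv (deriv φ) s = -κ * φ s)
    (hφ0 : φ 0 = 1) (hφ0' : deriv φ 0 = -lam) :
    (∀ s : ℝ, 0 ≤ s → (∀ u ∈ Set.Icc (0 : ℝ) s, 0 < φ u) →
        0 ≤ deriv (fun u => -deriv φ u / φ u) s) ↔
      (0 ≤ κ ∨ (κ < 0 ∧ Real.sqrt |κ| ≤ |lam|)) := by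
  -- Energy is constant
  set E : ℝ → ℝ := fun s => (deriv φ s) ^ 2 + κ * (φ s) ^ 2 with hEdef
  have hEderiv : ∀ s : ℝ, HasDerivAt E 0 s := by
    intro s
    have h1 : HasDerivAt (fun u => (deriv φ u) ^ 2)
        (2 * deriv φ s * (-κ * φ s)) s := by
      have := ((hφ' s).hasDerivAt.pow 2)
      show HasDerivAt (deriv φ ^ 2) (2 * deriv φ s * (-κ * φ s)) s
      simpa [hode s, mul_comm, mul_assoc, mul_left_comm] using this
    have h2 : HasDerivAt (fun u => κ * (φ u) ^ 2)
        (κ * (2 * φ s * deriv φ s)) s := by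
      have := ((hφ s).hasDerivAt.pow 2).const_mul κ
      simpa [mul_comm, mul_assoc, mul_left_comm] using this
    have heq : 2 * deriv φ s * (-κ * φ s) + κ * (2 * φ s * deriv φ s) = 0 := by
      ring
    have h3 := h1.add h2
    rw [heq] at h3
    exact h3
  have hEdiff : Differentiable ℝ E := fun s => (hEderiv s).differentiableAt
  have hEconst : ∀ s : ℝ, E s = lam ^ 2 + κ := by
    intro s
    have := is_const_of_deriv_eq_zero hEdiff (fun x => (hEderiv x).deriv) s 0
    rw [this]
    simp only [hEdef, hφ0, hφ0']
    ring
  -- derivative of -φ'/φ where φ ≠ 0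
  have hderiv : ∀ s : ℝ, φ s ≠ 0 →
      deriv (fun u => -deriv φ u / φ u) s = (lam ^ 2 + κ) / (φ s) ^ 2 := by
    intro s hs
    have h1 : HasDerivAt (fun u => -deriv φ u) (κ * φ s) s := by
      have := (hφ' s).hasDerivAt.neg
      rw [hode s] at this
      show HasDerivAt (-deriv φ) (κ * φ s) s
      simpa using this
    have := (h1.div (hφ s).hasDerivAt hs).deriv
    rw [show (fun u => -deriv φ u / φ u) = (fun u => -deriv φ u) / φ from rfl, this]
    have : κ * φ s * φ s - -deriv φ s * deriv φ s = E s := by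
      simp [hEdef]; ring
    rw [this, hEconst s]
  have key : 0 ≤ lam ^ 2 + κ ↔ (0 ≤ κ ∨ (κ < 0 ∧ Real.sqrt |κ| ≤ |lam|)) := by
    constructor
    · intro h
      rcases le_or_gt 0 κ with hκ | hκ
      · exact Or.inl hκ
      · refine Or.inr ⟨hκ, ?_⟩
        have habs : |κ| ≤ lam ^ 2 := by
          rw [abs_of_neg hκ]; linarith
        calc Real.sqrt |κ| ≤ Real.sqrt (lam ^ 2) := Real.sqrt_le_sqrt habs
          _ = |lam| := Real.sqrt_sq_eq_abs lam
    · rintro (hκ | ⟨hκ, hle⟩)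
      · positivity
      · have : |κ| ≤ lam ^ 2 := by
          have h1 : Real.sqrt |κ| ^ 2 ≤ |lam| ^ 2 := by
            exact pow_le_pow_left₀ (Real.sqrt_nonneg _) hle 2
          rwa [Real.sq_sqrt (abs_nonneg κ), sq_abs] at h1
        rw [abs_of_neg hκ] at this
        linarith
  rw [← key]
  constructor
  · intro h
    have h0 := h 0 le_rfl (by intro u hu; simp at hu; simp [hu, hφ0])
    rw [hderiv 0 (by simp [hφ0])] at h0
    rw [hφ0] at h0
    simpa using h0
  · intro h s _ hpos
    have hφs : 0 < φ s := hpos s ⟨‹0 ≤ s›, le_rfl⟩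
    rw [hderiv s hφs.ne']
    positivity
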